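/- Let G be a group acting on sets, E, E', E'' be G-sets, and consider G-equivariant relations (G-invariant subsets of products). For g a G-invariant subset of E''×E', g' a G-invariant subset of E'×E, and points witnessing the composition, define for an atom (orbit) a in the composition g∘g' the coefficient μ(a;g,g') = |{z ∈ E' | (x,z) ∈ g and (z,y) ∈ g'}| for any (x,y) ∈ a, and |g|_l = |{z | (z,u) ∈ g}| for u in the source orbit. Then when all these cardinalities are finite, for transitive G-sets one has |g|_l·|g'|_l = Σ_{a orbit ⊆ g∘g'} μ(a;g,g')·|a|_l, where the sum ranges over the G-orbits a contained in the composed relation. -/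
import Mathlib

/-- For `G`-equivariant relations `g ⊆ E'' × E'` and `g' ⊆ E' × E` between transitive
`G`-sets, with finite multiplicities, the left multiplicities satisfy
`|g|_l · |g'|_l = Σ_{a orbit ⊆ g∘g'} μ(a;g,g') · |a|_l`, the sum ranging over the
`G`-orbits `a` of the diagonal action on `E'' × E` contained in the composed relation. -/
theorem stmt15 {G : Type*} [Group G] {E E' E'' : Type*}
    [MulAction G E] [MulAction G E'] [MulAction G E'']
    [MulAction.IsPretransitive G E] [MulAction.IsPretransitive G E']
    [MulAction.IsPretransitive G E'']
    (g : Set (E'' × E')) (g' : Set (E' × E))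
    (hg : ∀ (σ : G), ∀ p ∈ g, (σ • p.1, σ • p.2) ∈ g)
    (hg' : ∀ (σ : G), ∀ p ∈ g', (σ • p.1, σ • p.2) ∈ g')
    (u' : E') (u : E)
    (hfin : {z : E'' | (z, u') ∈ g}.Finite)
    (hfin' : {z : E' | (z, u) ∈ g'}.Finite) :
    Nat.card {z : E'' | (z, u') ∈ g} * Nat.card {z : E' | (z, u) ∈ g'} =
      ∑ᶠ q ∈ {q : Quotient (MulAction.orbitRel G (E'' × E)) |
          MulAction.orbit G (Quotient.out q) ⊆
            {p : E'' × E | ∃ z, (p.1, z) ∈ g ∧ (z, p.2) ∈ g'}},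
        Nat.card {z : E' | ((Quotient.out q).1, z) ∈ g ∧ (z, (Quotient.out q).2) ∈ g'} *
          Nat.card {z : E'' | (z, u) ∈ MulAction.orbit G (Quotient.out q)} := by
  classical
  set X : Set (E'' × E') := {p | p ∈ g ∧ (p.2, u) ∈ g'} with hXdef
  -- choice of group element sending w to u'
  let σ : E' → G := fun w => Classical.choose (MulAction.exists_smul_eq G w u')
  have hσ : ∀ w, σ w • w = u' := fun w => Classical.choose_spec (MulAction.exists_smul_eq G w u')
  -- Step A : X ≃ {z | (z,u) ∈ g'} × {z | (z,u') ∈ g}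
  let e : X ≃ ({z : E' | (z, u) ∈ g'} × {z : E'' | (z, u') ∈ g}) :=
  { toFun := fun p => (⟨p.1.2, p.2.2⟩, ⟨σ p.1.2 • p.1.1, by
      have := hg (σ p.1.2) p.1 p.2.1
      simpa [hσ p.1.2] using this⟩)
    invFun := fun p => ⟨((σ p.1.1)⁻¹ • p.2.1, p.1.1), by
      refine ⟨?_, p.1.2⟩
      have := hg (σ p.1.1)⁻¹ (p.2.1, u') p.2.2
      simpa [← hσ p.1.1] using this⟩
    left_inv := fun p => by
      ext <;> simp
    right_inv := fun p => by
      ext <;> simp }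
  have hXfin : X.Finite := by
    rw [← Set.finite_coe_iff]
    haveI := hfin.to_subtype
    haveI := hfin'.to_subtype
    exact Finite.of_equiv _ e.symm
  have hcardX : Nat.card {z : E'' | (z, u') ∈ g} * Nat.card {z : E' | (z, u) ∈ g'}
      = Nat.card X := by
    rw [Nat.card_congr e, Nat.card_prod, mul_comm]
  -- the classifying map
  let f : E'' × E' → Quotient (MulAction.orbitRel G (E'' × E)) :=
    fun p => Quotient.mk (MulAction.orbitRel G (E'' × E)) (p.1, u)
  have hmemiff : ∀ (p : E'' × E) (q : Quotient (MulAction.orbitRel G (E'' × E))),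
      p ∈ MulAction.orbit G (Quotient.out q) ↔
        Quotient.mk (MulAction.orbitRel G (E'' × E)) p = q := by
    intro p q
    conv_rhs => rw [← Quotient.out_eq q]
    rw [Quotient.eq]
    exact (MulAction.orbitRel_apply (G := G)).symm
  let s₀ : Finset (Quotient (MulAction.orbitRel G (E'' × E))) := hXfin.toFinset.image f
  -- the index set of the sum equals s₀
  have hT : {q : Quotient (MulAction.orbitRel G (E'' × E)) |
      MulAction.orbit G (Quotient.out q) ⊆
        {p : E'' × E | ∃ z, (p.1, z) ∈ g ∧ (z, p.2) ∈ g'}} = (s₀ : Set _) := by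
    ext q
    simp only [Set.mem_setOf_eq, Finset.coe_image, Set.mem_image, Finset.mem_coe,
      Set.Finite.mem_toFinset, s₀]
    constructor
    · intro hq
      have hself : Quotient.out q ∈ MulAction.orbit G (Quotient.out q) :=
        MulAction.mem_orbit_self _
      obtain ⟨z, hz1, hz2⟩ := hq hself
      obtain ⟨ρ, hρ⟩ := MulAction.exists_smul_eq G (Quotient.out q).2 u
      refine ⟨(ρ • (Quotient.out q).1, ρ • z), ⟨hg ρ _ hz1, by simpa [hρ] using hg' ρ _ hz2⟩, ?_⟩
      show Quotient.mk _ (ρ • (Quotient.out q).1, u) = q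
      rw [← (hmemiff _ q)]
      rw [← hρ]
      exact MulAction.mem_orbit _ ρ
    · rintro ⟨p, hp, rfl⟩
      intro x hx
      rw [hmemiff] at hx
      have : x ∈ MulAction.orbit G (p.1, u) := by
        rw [MulAction.mem_orbit_iff]
        have := Quotient.exact hx
        obtain ⟨τ, hτ⟩ := MulAction.orbitRel_apply.mp this
        exact ⟨τ, hτ⟩
      obtain ⟨τ, hτ⟩ := MulAction.mem_orbit_iff.mp this
      refine ⟨τ • p.2, ?_, ?_⟩
      · have := hg τ p hp.1
        have h1 : τ • p.1 = x.1 := by rw [← hτ]; rfl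
        rwa [h1] at this
      · have := hg' τ (p.2, u) hp.2
        have h2 : τ • u = x.2 := by rw [← hτ]; rfl
        rwa [h2] at this
  rw [hT, finsum_mem_coe_finset]
  -- fiberwise count
  have hXcard2 : Nat.card X = hXfin.toFinset.card := by
    rw [Nat.card_coe_set_eq, ← Set.ncard_coe_finset, Set.Finite.coe_toFinset]
  rw [hcardX, hXcard2,
    Finset.card_eq_sum_card_fiberwise (f := f) (t := s₀)
      (fun x hx => Finset.mem_image_of_mem f hx)]
  refine Finset.sum_congr rfl fun q hq => ?_
  -- fiber as a set
  have hfib : ((hXfin.toFinset.filter fun p => f p = q : Finset (E'' × E')) : Set (E'' × E'))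
      = {p : E'' × E' | (p ∈ g ∧ (p.2, u) ∈ g') ∧
          (p.1, u) ∈ MulAction.orbit G (Quotient.out q)} := by
    ext p
    simp only [Finset.coe_filter, Set.Finite.mem_toFinset, Set.mem_setOf_eq, hmemiff, f]
    exact Iff.rfl
  have hfibcard : (hXfin.toFinset.filter fun p => f p = q).card
      = Nat.card {p : E'' × E' | (p ∈ g ∧ (p.2, u) ∈ g') ∧
          (p.1, u) ∈ MulAction.orbit G (Quotient.out q)} := by
    rw [Nat.card_coe_set_eq, ← hfib, Set.ncard_coe_finset]
  rw [hfibcard]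
  -- equivalence of the fiber with the product
  let τf : (v : E'') → (v, u) ∈ MulAction.orbit G (Quotient.out q) → G :=
    fun v h => Classical.choose (MulAction.mem_orbit_iff.mp h)
  have hτf : ∀ v h, τf v h • (Quotient.out q) = (v, u) :=
    fun v h => Classical.choose_spec (MulAction.mem_orbit_iff.mp h)
  have hτ1 : ∀ v h, τf v h • (Quotient.out q).1 = v := by
    intro v h; have := hτf v h; rw [Prod.ext_iff] at this; exact this.1
  have hτ2 : ∀ v h, τf v h • (Quotient.out q).2 = u := by
    intro v h; have := hτf v h; rw [Prod.ext_iff] at this; exact this.2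
  let e2 : {p : E'' × E' | (p ∈ g ∧ (p.2, u) ∈ g') ∧
        (p.1, u) ∈ MulAction.orbit G (Quotient.out q)} ≃
      ({z : E'' | (z, u) ∈ MulAction.orbit G (Quotient.out q)} ×
        {z : E' | ((Quotient.out q).1, z) ∈ g ∧ (z, (Quotient.out q).2) ∈ g'}) :=
  { toFun := fun p => (⟨p.1.1, p.2.2⟩, ⟨(τf p.1.1 p.2.2)⁻¹ • p.1.2, by
      constructor
      · have := hg (τf p.1.1 p.2.2)⁻¹ p.1 p.2.1.1
        have h1 : (τf p.1.1 p.2.2)⁻¹ • p.1.1 = (Quotient.out q).1 :=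
          inv_smul_eq_iff.mpr (hτ1 p.1.1 p.2.2).symm
        rwa [h1] at this
      · have := hg' (τf p.1.1 p.2.2)⁻¹ (p.1.2, u) p.2.1.2
        have h2 : (τf p.1.1 p.2.2)⁻¹ • u = (Quotient.out q).2 :=
          inv_smul_eq_iff.mpr (hτ2 p.1.1 p.2.2).symm
        rwa [h2] at this⟩)
    invFun := fun p => ⟨(p.1.1, τf p.1.1 p.1.2 • p.2.1), by
      refine ⟨⟨?_, ?_⟩, p.1.2⟩
      · have := hg (τf p.1.1 p.1.2) ((Quotient.out q).1, p.2.1) p.2.2.1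
        rwa [hτ1 p.1.1 p.1.2] at this
      · have := hg' (τf p.1.1 p.1.2) (p.2.1, (Quotient.out q).2) p.2.2.2
        rwa [hτ2 p.1.1 p.1.2] at this⟩
    left_inv := fun p => by
      ext <;> simp
    right_inv := fun p => by
      ext <;> simp }
  rw [Nat.card_congr e2, Nat.card_prod, mul_comm]
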